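/- Let dμ and dν be bounded ℝ^k-valued measures on a measurable space X, dμ_ε := dμ + ε dν, with decompositions dμ_ε = N_ε |dμ_ε| and dν = A_ε |dμ_ε| + dν_s^ε (dν_s^ε ⊥ |dμ_ε|), and F(ε) := ∫_X |dμ_ε|. If ε₁ < ε₂ are both regular, then F'(ε₂) − F'(ε₁) = ∫_X (1/(2(ε₂ − ε₁))) |N_{ε₂} − N_{ε₁}|² ( |dμ_{ε₂}| + |dμ_{ε₁}| ) ≥ 0. -/

import Mathlib

open MeasureTheory Filter Set Topology
open scoped ENNReal NNReal InnerProductSpace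

section Aux
variable {E : Type*} [NormedAddCommGroup E] [InnerProductSpace ℝ E]

/-- derivative of `t ↦ ‖f + t • g‖` at `0` when `f ≠ 0`. -/
lemma aux_hasDerivAt_norm (f g : E) (hf : f ≠ 0) :
    HasDerivAt (fun t : ℝ => ‖f + t • g‖) (⟪f, g⟫_ℝ / ‖f‖) 0 := by
  have hq : ∀ t : ℝ, ‖f + t • g‖ = Real.sqrt (‖f‖ ^ 2 + 2 * ⟪f, g⟫_ℝ * t + ‖g‖ ^ 2 * t ^ 2) := by
    intro t
    rw [← Real.sqrt_sq (norm_nonneg (f + t • g))]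
    congr 1
    rw [← real_inner_self_eq_norm_sq, ← real_inner_self_eq_norm_sq, ← real_inner_self_eq_norm_sq]
    simp only [inner_add_left, inner_add_right, real_inner_smul_left, real_inner_smul_right,
      real_inner_comm g f]
    ring
  have hq' : HasDerivAt (fun t : ℝ => ‖f‖ ^ 2 + 2 * ⟪f, g⟫_ℝ * t + ‖g‖ ^ 2 * t ^ 2)
      (2 * ⟪f, g⟫_ℝ) 0 := by
    have h1 : HasDerivAt (fun t : ℝ => ‖f‖ ^ 2 + 2 * ⟪f, g⟫_ℝ * t + ‖g‖ ^ 2 * t ^ 2)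
        (0 + 2 * ⟪f, g⟫_ℝ * 1 + ‖g‖ ^ 2 * (2 * 0 ^ 1)) 0 := by
      exact ((hasDerivAt_const 0 (‖f‖^2)).add (((hasDerivAt_id 0).const_mul
        (2 * ⟪f, g⟫_ℝ)).congr_deriv (by ring))).add ((hasDerivAt_pow 2 0).const_mul (‖g‖^2))
    simpa using h1
  have hne : ‖f‖ ^ 2 + 2 * ⟪f, g⟫_ℝ * 0 + ‖g‖ ^ 2 * 0 ^ 2 ≠ 0 := by
    simpa using pow_ne_zero 2 (norm_ne_zero_iff.mpr hf)
  have := (Real.hasDerivAt_sqrt hne).comp 0 hq'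
  have heq : (fun t : ℝ => ‖f + t • g‖)
      = Real.sqrt ∘ fun t : ℝ => ‖f‖ ^ 2 + 2 * ⟪f, g⟫_ℝ * t + ‖g‖ ^ 2 * t ^ 2 := funext hq
  rw [heq]
  refine this.congr_deriv ?_
  have h0 : Real.sqrt (‖f‖ ^ 2 + 2 * ⟪f, g⟫_ℝ * 0 + ‖g‖ ^ 2 * 0 ^ 2) = ‖f‖ := by
    simp [Real.sqrt_sq (norm_nonneg f)]
  rw [h0]
  field_simp

lemma aux_lipschitz (f g : E) (c : ℝ) :
    LipschitzWith ‖g‖₊ (fun e : ℝ => ‖f + (e - c) • g‖) := by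
  refine LipschitzWith.of_dist_le_mul fun x y => ?_
  rw [Real.dist_eq]
  calc |‖f + (x - c) • g‖ - ‖f + (y - c) • g‖| ≤ ‖(f + (x - c) • g) - (f + (y - c) • g)‖ :=
        abs_norm_sub_norm_le _ _
    _ = ‖(x - y) • g‖ := by
        congr 1
        rw [sub_smul, sub_smul, sub_smul]
        abel
    _ = |x - y| * ‖g‖ := by rw [norm_smul, Real.norm_eq_abs]
    _ = ‖g‖ * dist x y := by rw [Real.dist_eq, mul_comm]

variable {X : Type*} [MeasurableSpace X]

lemma aux_ac [CompleteSpace E] {μ ρ : Measure X} [IsFiniteMeasure μ] [IsFiniteMeasure ρ]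
    {N : X → E}
    (hN1 : ∀ᵐ x ∂μ, ‖N x‖ = 1) (hNint : Integrable N μ)
    (h : ∀ S : Set X, MeasurableSet S → ρ S = 0 → ∫ x in S, N x ∂μ = 0) :
    μ ≪ ρ := by
  refine Measure.AbsolutelyContinuous.mk fun S hS hρS => ?_
  have hz : N =ᵐ[μ.restrict S] 0 := by
    refine ae_eq_zero_of_forall_setIntegral_eq_of_sigmaFinite
      (fun T hT _ => (hNint.restrict.restrict (s := T))) (fun T hT _ => ?_)
    rw [Measure.restrict_restrict hT]
    exact h (T ∩ S) (hT.inter hS) (le_antisymm (hρS ▸ measure_mono inter_subset_right) zero_le)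
  have h1 : ∀ᵐ x ∂μ.restrict S, ‖N x‖ = 1 := ae_restrict_of_ae hN1
  have : ∀ᵐ _x ∂μ.restrict S, False := by
    filter_upwards [hz, h1] with x hx1 hx2
    rw [hx1] at hx2; simp at hx2
  have h0 : μ.restrict S univ = 0 := by simpa [ae_iff] using this
  rwa [Measure.restrict_apply_univ] at h0

end Aux

set_option maxHeartbeats 1000000 in
theorem derivative_difference_formula
    (X : Type*) [MeasurableSpace X] (k : ℕ)
    (μtv : ℝ → Measure X) (N A : ℝ → X → EuclideanSpace ℝ (Fin k))
    (νtv : Measure X) (Nν : X → EuclideanSpace ℝ (Fin k))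
    (νstv : ℝ → Measure X) (Ns : ℝ → X → EuclideanSpace ℝ (Fin k))
    (hμfin : ∀ ε, IsFiniteMeasure (μtv ε))
    (hνfin : IsFiniteMeasure νtv)
    (hνsfin : ∀ ε, IsFiniteMeasure (νstv ε))
    (hN1 : ∀ ε, ∀ᵐ x ∂(μtv ε), ‖N ε x‖ = 1)
    (hNν1 : ∀ᵐ x ∂νtv, ‖Nν x‖ = 1)
    (hNs1 : ∀ ε, ∀ᵐ x ∂(νstv ε), ‖Ns ε x‖ = 1)
    (hNint : ∀ ε, Integrable (N ε) (μtv ε))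
    (hAint : ∀ ε, Integrable (A ε) (μtv ε))
    (hNνint : Integrable Nν νtv)
    (hNsint : ∀ ε, Integrable (Ns ε) (νstv ε))
    (hsing : ∀ ε, (νstv ε).MutuallySingular (μtv ε))
    (hadd : ∀ ε : ℝ, ∀ S : Set X, MeasurableSet S →
      ∫ x in S, N ε x ∂(μtv ε) = (∫ x in S, N 0 x ∂(μtv 0)) + ε • ∫ x in S, Nν x ∂νtv)
    (hRN : ∀ ε : ℝ, ∀ S : Set X, MeasurableSet S →
      ∫ x in S, Nν x ∂νtv = (∫ x in S, A ε x ∂(μtv ε)) + ∫ x in S, Ns ε x ∂(νstv ε))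
    (F' : ℝ → ℝ)
    (hF' : ∀ ε : ℝ, νstv ε = 0 →
      HasDerivAt (fun e : ℝ => (μtv e Set.univ).toReal) (F' ε) ε)
    (ε₁ ε₂ : ℝ) (hlt : ε₁ < ε₂) (hreg₁ : νstv ε₁ = 0) (hreg₂ : νstv ε₂ = 0) :
    F' ε₂ - F' ε₁ =
      ∫ x, (1 / (2 * (ε₂ - ε₁))) * ‖N ε₂ x - N ε₁ x‖ ^ 2 ∂(μtv ε₂ + μtv ε₁) ∧
    0 ≤ F' ε₂ - F' ε₁ := by
  classical
  haveI := hμfin ε₁; haveI := hμfin ε₂; haveI := hνfin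
  set ρ : Measure X := μtv ε₁ + μtv ε₂ + νtv with hρdef
  haveI : IsFiniteMeasure ρ := by
    constructor
    simp only [hρdef, Measure.add_apply]
    exact ENNReal.add_lt_top.mpr ⟨ENNReal.add_lt_top.mpr ⟨measure_lt_top _ _, measure_lt_top _ _⟩,
      measure_lt_top _ _⟩
  -- zero components of ρ-null sets
  have hcomp : ∀ S : Set X, ρ S = 0 → μtv ε₁ S = 0 ∧ μtv ε₂ S = 0 ∧ νtv S = 0 := by
    intro S hS
    simp only [hρdef, Measure.add_apply, add_eq_zero] at hS
    exact ⟨hS.1.1, hS.1.2, hS.2⟩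
  have hν_ac : νtv ≪ ρ := by
    refine Measure.AbsolutelyContinuous.mk fun S _ hS => (hcomp S hS).2.2
  -- the vector measure identity centered at ε₁
  have hvm : ∀ ε : ℝ, ∀ S : Set X, MeasurableSet S →
      ∫ x in S, N ε x ∂(μtv ε)
        = (∫ x in S, N ε₁ x ∂(μtv ε₁)) + (ε - ε₁) • ∫ x in S, Nν x ∂νtv := by
    intro ε S hS
    rw [hadd ε S hS, hadd ε₁ S hS, sub_smul]
    abel
  -- absolute continuity of all μtv ε
  have hac : ∀ ε : ℝ, μtv ε ≪ ρ := by
    intro ε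
    haveI := hμfin ε
    refine aux_ac (hN1 ε) (hNint ε) fun S hS hρS => ?_
    have h1 : (μtv ε₁).restrict S = 0 := Measure.restrict_eq_zero.mpr (hcomp S hρS).1
    have h2 : νtv.restrict S = 0 := Measure.restrict_eq_zero.mpr (hcomp S hρS).2.2
    rw [hvm ε S hS, h1, h2]
    simp
    -- Radon–Nikodym densities w.r.t. ρ
  set h1f : X → ℝ≥0∞ := (μtv ε₁).rnDeriv ρ with h1fdef
  set h2f : X → ℝ≥0∞ := (μtv ε₂).rnDeriv ρ with h2fdef
  set hνf : X → ℝ≥0∞ := νtv.rnDeriv ρ with hνfdef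
  set f₁ : X → EuclideanSpace ℝ (Fin k) := fun x => (h1f x).toReal • N ε₁ x with hf₁def
  set g : X → EuclideanSpace ℝ (Fin k) := fun x => (hνf x).toReal • Nν x with hgdef
  set f₂ : X → EuclideanSpace ℝ (Fin k) := fun x => f₁ x + (ε₂ - ε₁) • g x with hf₂def
  set fE₂ : X → EuclideanSpace ℝ (Fin k) := fun x => (h2f x).toReal • N ε₂ x with hfE₂def
  have hwd1 : ρ.withDensity h1f = μtv ε₁ := Measure.withDensity_rnDeriv_eq _ _ (hac ε₁)
  have hwd2 : ρ.withDensity h2f = μtv ε₂ := Measure.withDensity_rnDeriv_eq _ _ (hac ε₂)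
  -- integrability over ρ
  have hf₁i : Integrable f₁ ρ := (integrable_rnDeriv_smul_iff (hac ε₁)).mpr (hNint ε₁)
  have hgi : Integrable g ρ := (integrable_rnDeriv_smul_iff hν_ac).mpr hNνint
  have hfE₂i : Integrable fE₂ ρ := (integrable_rnDeriv_smul_iff (hac ε₂)).mpr (hNint ε₂)
  have hsmg : Integrable (fun x => (ε₂ - ε₁) • g x) ρ := hgi.smul (ε₂ - ε₁)
  have hf₂i : Integrable f₂ ρ := hf₁i.add hsmg
  -- set integral representations
  have hs1 : ∀ S : Set X, MeasurableSet S →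
      ∫ x in S, f₁ x ∂ρ = ∫ x in S, N ε₁ x ∂(μtv ε₁) :=
    fun S hS => setIntegral_rnDeriv_smul (hac ε₁) hS
  have hs2 : ∀ S : Set X, MeasurableSet S →
      ∫ x in S, fE₂ x ∂ρ = ∫ x in S, N ε₂ x ∂(μtv ε₂) :=
    fun S hS => setIntegral_rnDeriv_smul (hac ε₂) hS
  have hsν : ∀ S : Set X, MeasurableSet S →
      ∫ x in S, g x ∂ρ = ∫ x in S, Nν x ∂νtv :=
    fun S hS => setIntegral_rnDeriv_smul hν_ac hS
  -- f₂ is (a.e.) the density of the vector measure at ε₂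
  have hf₂ae : fE₂ =ᵐ[ρ] f₂ := by
    refine ae_eq_of_forall_setIntegral_eq_of_sigmaFinite
      (fun S hS _ => hfE₂i.integrableOn) (fun S hS _ => hf₂i.integrableOn)
      (fun S hS _ => ?_)
    rw [hs2 S hS, hvm ε₂ S hS, ← hs1 S hS, ← hsν S hS, ← integral_smul,
      ← integral_add hf₁i.integrableOn hsmg.integrableOn]
  -- regularity: g is a.e. equal to the (scaled) A-densities
  have hgreg : ∀ ε : ℝ, νstv ε = 0 → ∀ (h : IsFiniteMeasure (μtv ε)) (hacε : μtv ε ≪ ρ),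
      g =ᵐ[ρ] fun x => ((μtv ε).rnDeriv ρ x).toReal • A ε x := by
    intro ε hreg _ hacε
    have hAi : Integrable (fun x => ((μtv ε).rnDeriv ρ x).toReal • A ε x) ρ :=
      (integrable_rnDeriv_smul_iff hacε).mpr (hAint ε)
    refine ae_eq_of_forall_setIntegral_eq_of_sigmaFinite
      (fun S hS _ => hgi.integrableOn) (fun S hS _ => hAi.integrableOn)
      (fun S hS _ => ?_)
    rw [hsν S hS, setIntegral_rnDeriv_smul hacε hS, hRN ε S hS, hreg]
    simp
  have hgreg₁ : g =ᵐ[ρ] fun x => (h1f x).toReal • A ε₁ x :=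
    hgreg ε₁ hreg₁ (hμfin ε₁) (hac ε₁)
  have hgreg₂ : g =ᵐ[ρ] fun x => (h2f x).toReal • A ε₂ x :=
    hgreg ε₂ hreg₂ (hμfin ε₂) (hac ε₂)
  -- unit norms transferred to ρ
  have hu1 : ∀ᵐ x ∂ρ, h1f x ≠ 0 → ‖N ε₁ x‖ = 1 := by
    have := hN1 ε₁
    rw [← hwd1] at this
    exact (ae_withDensity_iff (Measure.measurable_rnDeriv _ _)).mp this
  have hu2 : ∀ᵐ x ∂ρ, h2f x ≠ 0 → ‖N ε₂ x‖ = 1 := by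
    have := hN1 ε₂
    rw [← hwd2] at this
    exact (ae_withDensity_iff (Measure.measurable_rnDeriv _ _)).mp this
  have hfin1 : ∀ᵐ x ∂ρ, h1f x ≠ ∞ :=
    (Measure.rnDeriv_lt_top _ _).mono fun x h => h.ne
  have hfin2 : ∀ᵐ x ∂ρ, h2f x ≠ ∞ :=
    (Measure.rnDeriv_lt_top _ _).mono fun x h => h.ne
  -- master pointwise a.e. facts
  have hmaster : ∀ᵐ x ∂ρ,
      (f₂ x = (h2f x).toReal • N ε₂ x) ∧
      (g x = (h1f x).toReal • A ε₁ x) ∧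
      (g x = (h2f x).toReal • A ε₂ x) ∧
      ((h1f x).toReal ≠ 0 → ‖N ε₁ x‖ = 1) ∧
      ((h2f x).toReal ≠ 0 → ‖N ε₂ x‖ = 1) := by
    filter_upwards [hf₂ae, hgreg₁, hgreg₂, hu1, hu2] with x h1 h2 h3 h4 h5
    refine ⟨h1.symm, h2, h3, fun h => h4 fun h0 => h (by rw [h0]; simp),
      fun h => h5 fun h0 => h (by rw [h0]; simp)⟩
  have hcases : ∀ᵐ x ∂ρ,
      ((h1f x).toReal = 0 → f₁ x = 0 ∧ g x = 0 ∧ f₂ x = 0 ∧ (h2f x).toReal = 0) ∧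
      ((h2f x).toReal = 0 → f₁ x = 0 ∧ g x = 0 ∧ f₂ x = 0 ∧ (h1f x).toReal = 0) ∧
      ((h1f x).toReal ≠ 0 → ‖f₁ x‖ = (h1f x).toReal) ∧
      ((h2f x).toReal ≠ 0 → ‖f₂ x‖ = (h2f x).toReal) := by
    filter_upwards [hmaster] with x hx
    obtain ⟨h1, h2, h3, h4, h5⟩ := hx
    have hf1x : f₁ x = (h1f x).toReal • N ε₁ x := rfl
    have hf2x : f₂ x = f₁ x + (ε₂ - ε₁) • g x := rfl
    constructor
    · intro hs
      have hg0 : g x = 0 := by rw [h2, hs, zero_smul]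
      have hf10 : f₁ x = 0 := by rw [hf1x, hs, zero_smul]
      have hf20 : f₂ x = 0 := by rw [hf2x, hf10, hg0, smul_zero, add_zero]
      refine ⟨hf10, hg0, hf20, ?_⟩
      by_contra ht
      have hz : (h2f x).toReal • N ε₂ x = 0 := by rw [← h1, hf20]
      rcases smul_eq_zero.mp hz with h | h
      · exact ht h
      · have := h5 ht; rw [h, norm_zero] at this; norm_num at this
    refine ⟨?_, ?_, ?_⟩
    · intro ht
      have hg0 : g x = 0 := by rw [h3, ht, zero_smul]
      have hf20 : f₂ x = 0 := by rw [h1, ht, zero_smul]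
      have hf10 : f₁ x = 0 := by
        have := hf2x
        rw [hf20, hg0, smul_zero, add_zero] at this
        exact this.symm
      refine ⟨hf10, hg0, hf20, ?_⟩
      by_contra hs
      have hz : (h1f x).toReal • N ε₁ x = 0 := by rw [← hf1x, hf10]
      rcases smul_eq_zero.mp hz with h | h
      · exact hs h
      · have := h4 hs; rw [h, norm_zero] at this; norm_num at this
    · intro hs
      rw [hf1x, norm_smul, h4 hs, Real.norm_eq_abs, abs_of_nonneg ENNReal.toReal_nonneg,
        mul_one]
    · intro ht
      rw [h1, norm_smul, h5 ht, Real.norm_eq_abs, abs_of_nonneg ENNReal.toReal_nonneg,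
        mul_one]
  -- measurability of candidate derivatives
  have hD₁sm : AEStronglyMeasurable (fun x => ⟪f₁ x, g x⟫_ℝ / ‖f₁ x‖) ρ :=
    ((hf₁i.1.inner hgi.1).aemeasurable.div hf₁i.1.norm.aemeasurable).aestronglyMeasurable
  have hD₂sm : AEStronglyMeasurable (fun x => ⟪f₂ x, g x⟫_ℝ / ‖f₂ x‖) ρ :=
    ((hf₂i.1.inner hgi.1).aemeasurable.div hf₂i.1.norm.aemeasurable).aestronglyMeasurable
  -- ingredients for the dominated-derivative theorem
  have hmeasF : ∀ e : ℝ, AEStronglyMeasurable (fun a => ‖f₁ a + (e - ε₁) • g a‖) ρ :=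
    fun e => ((hf₁i.add (hgi.smul (e - ε₁))).1).norm
  have hlipF : ∀ c : ℝ, ∀ᵐ a ∂ρ, LipschitzOnWith (Real.nnabs ‖g a‖)
      (fun e : ℝ => ‖f₁ a + (e - ε₁) • g a‖) (Metric.ball c 1) := by
    intro c
    refine Eventually.of_forall fun a => ?_
    have hnn : Real.nnabs ‖g a‖ = ‖g a‖₊ :=
      NNReal.coe_injective (by simp [abs_of_nonneg (norm_nonneg _)])
    rw [hnn]
    exact (aux_lipschitz (f₁ a) (g a) ε₁).lipschitzOnWith
  -- derivative at ε₁
  have h_diff₁ : ∀ᵐ a ∂ρ, HasDerivAt (fun e : ℝ => ‖f₁ a + (e - ε₁) • g a‖)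
      (⟪f₁ a, g a⟫_ℝ / ‖f₁ a‖) ε₁ := by
    filter_upwards [hcases] with a ha
    by_cases hs : (h1f a).toReal = 0
    · obtain ⟨hf10, hg0, -, -⟩ := ha.1 hs
      have hfun : (fun e : ℝ => ‖f₁ a + (e - ε₁) • g a‖) = fun _ => 0 := by
        funext e; rw [hf10, hg0, smul_zero, add_zero, norm_zero]
      have hval : ⟪f₁ a, g a⟫_ℝ / ‖f₁ a‖ = 0 := by rw [hf10]; simp
      rw [hfun, hval]
      exact hasDerivAt_const _ _
    · have hne : f₁ a ≠ 0 := by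
        intro h0
        exact hs (by rw [← ha.2.2.1 hs, h0, norm_zero])
      have h0 : HasDerivAt (fun t : ℝ => ‖f₁ a + t • g a‖)
          (⟪f₁ a, g a⟫_ℝ / ‖f₁ a‖) (ε₁ - ε₁) := by
        rw [sub_self]; exact aux_hasDerivAt_norm _ _ hne
      exact h0.comp_sub_const ε₁ ε₁
  have hder₁ := hasDerivAt_integral_of_dominated_loc_of_lip
    (F := fun (e : ℝ) (a : X) => ‖f₁ a + (e - ε₁) • g a‖)
    (F' := fun x => ⟪f₁ x, g x⟫_ℝ / ‖f₁ x‖) (μ := ρ) (x₀ := ε₁)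
    (bound := fun a => ‖g a‖) (Metric.ball_mem_nhds ε₁ zero_lt_one)
    (Eventually.of_forall hmeasF) (by simpa using hf₁i.norm) hD₁sm (hlipF ε₁)
    hgi.norm h_diff₁
  -- derivative at ε₂
  have h_diff₂ : ∀ᵐ a ∂ρ, HasDerivAt (fun e : ℝ => ‖f₁ a + (e - ε₁) • g a‖)
      (⟪f₂ a, g a⟫_ℝ / ‖f₂ a‖) ε₂ := by
    filter_upwards [hcases] with a ha
    have hfe : (fun e : ℝ => ‖f₁ a + (e - ε₁) • g a‖)
        = fun e : ℝ => ‖f₂ a + (e - ε₂) • g a‖ := by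
      funext e
      have : f₁ a + (e - ε₁) • g a = f₂ a + (e - ε₂) • g a := by
        show f₁ a + (e - ε₁) • g a = (f₁ a + (ε₂ - ε₁) • g a) + (e - ε₂) • g a
        rw [add_assoc, ← add_smul, show (ε₂ - ε₁) + (e - ε₂) = e - ε₁ by ring]
      rw [this]
    rw [hfe]
    by_cases ht : (h2f a).toReal = 0
    · obtain ⟨-, hg0, hf20, -⟩ := ha.2.1 ht
      have hfun : (fun e : ℝ => ‖f₂ a + (e - ε₂) • g a‖) = fun _ => 0 := by
        funext e; rw [hf20, hg0, smul_zero, add_zero, norm_zero]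
      have hval : ⟪f₂ a, g a⟫_ℝ / ‖f₂ a‖ = 0 := by rw [hf20]; simp
      rw [hfun, hval]
      exact hasDerivAt_const _ _
    · have hne : f₂ a ≠ 0 := by
        intro h0
        exact ht (by rw [← ha.2.2.2 ht, h0, norm_zero])
      have h0 : HasDerivAt (fun t : ℝ => ‖f₂ a + t • g a‖)
          (⟪f₂ a, g a⟫_ℝ / ‖f₂ a‖) (ε₂ - ε₂) := by
        rw [sub_self]; exact aux_hasDerivAt_norm _ _ hne
      exact h0.comp_sub_const ε₂ ε₂
  have hder₂ := hasDerivAt_integral_of_dominated_loc_of_lip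
    (F := fun (e : ℝ) (a : X) => ‖f₁ a + (e - ε₁) • g a‖)
    (F' := fun x => ⟪f₂ x, g x⟫_ℝ / ‖f₂ x‖) (μ := ρ) (x₀ := ε₂)
    (bound := fun a => ‖g a‖) (Metric.ball_mem_nhds ε₂ zero_lt_one)
    (Eventually.of_forall hmeasF) (by exact hf₂i.norm) hD₂sm (hlipF ε₂)
    hgi.norm h_diff₂
  -- F(e) in integral form
  have hFrep : ∀ e : ℝ, ((μtv e) univ).toReal = ∫ a, ‖f₁ a + (e - ε₁) • g a‖ ∂ρ := by
    intro e
    haveI := hμfin e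
    have hace := hac e
    have hfei : Integrable (fun x => ((μtv e).rnDeriv ρ x).toReal • N e x) ρ :=
      (integrable_rnDeriv_smul_iff hace).mpr (hNint e)
    have hsm : Integrable (fun x => (e - ε₁) • g x) ρ := hgi.smul (e - ε₁)
    have hfeae : (fun x => ((μtv e).rnDeriv ρ x).toReal • N e x)
        =ᵐ[ρ] fun x => f₁ x + (e - ε₁) • g x := by
      refine ae_eq_of_forall_setIntegral_eq_of_sigmaFinite (fun S hS _ => hfei.integrableOn)
        (fun S hS _ => (hf₁i.add hsm).integrableOn) (fun S hS _ => ?_)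
      rw [setIntegral_rnDeriv_smul hace hS, hvm e S hS, ← hs1 S hS, ← hsν S hS,
        ← integral_smul, ← integral_add hf₁i.integrableOn hsm.integrableOn]
    have hue : ∀ᵐ x ∂ρ, (μtv e).rnDeriv ρ x ≠ 0 → ‖N e x‖ = 1 := by
      have h := hN1 e
      rw [← Measure.withDensity_rnDeriv_eq _ _ hace] at h
      exact (ae_withDensity_iff (Measure.measurable_rnDeriv _ _)).mp h
    calc ((μtv e) univ).toReal = ∫ x, ((μtv e).rnDeriv ρ x).toReal ∂ρ :=
          (Measure.integral_toReal_rnDeriv hace).symm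
      _ = ∫ x, ‖((μtv e).rnDeriv ρ x).toReal • N e x‖ ∂ρ := by
          refine integral_congr_ae ?_
          filter_upwards [hue] with x hx
          by_cases h0 : ((μtv e).rnDeriv ρ x).toReal = 0
          · rw [h0, zero_smul, norm_zero]
          · have h1 : ‖N e x‖ = 1 := hx fun hh => h0 (by rw [hh]; simp)
            rw [norm_smul, h1, Real.norm_eq_abs, abs_of_nonneg ENNReal.toReal_nonneg, mul_one]
      _ = ∫ a, ‖f₁ a + (e - ε₁) • g a‖ ∂ρ :=
          integral_congr_ae (hfeae.mono fun x hx => by simp only [hx])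
  -- identify F' with our integrals
  have hG1 : F' ε₁ = ∫ a, ⟪f₁ a, g a⟫_ℝ / ‖f₁ a‖ ∂ρ := by
    have h := hF' ε₁ hreg₁
    rw [funext hFrep] at h
    exact h.unique hder₁.2
  have hG2 : F' ε₂ = ∫ a, ⟪f₂ a, g a⟫_ℝ / ‖f₂ a‖ ∂ρ := by
    have h := hF' ε₂ hreg₂
    rw [funext hFrep] at h
    exact h.unique hder₂.2
  have hdiffeq : F' ε₂ - F' ε₁
      = ∫ a, (⟪f₂ a, g a⟫_ℝ / ‖f₂ a‖ - ⟪f₁ a, g a⟫_ℝ / ‖f₁ a‖) ∂ρ := by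
    rw [hG2, hG1, ← integral_sub hder₂.1 hder₁.1]
  -- rewrite the target integral over μtv ε₂ + μtv ε₁ as a ρ-integral
  have hwmeas : Measurable (fun x => (h2f x + h1f x).toNNReal) :=
    ((Measure.measurable_rnDeriv _ _).add (Measure.measurable_rnDeriv _ _)).ennreal_toNNReal
  have hsum : μtv ε₂ + μtv ε₁ = ρ.withDensity (fun x => ((h2f x + h1f x).toNNReal : ℝ≥0∞)) := by
    have h1 : μtv ε₂ + μtv ε₁ = ρ.withDensity (fun x => h2f x + h1f x) := by
      rw [← hwd2, ← hwd1]
      exact (withDensity_add_left (Measure.measurable_rnDeriv _ _) h1f).symm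
    have h2 : (fun x => h2f x + h1f x) =ᵐ[ρ] fun x => ((h2f x + h1f x).toNNReal : ℝ≥0∞) := by
      filter_upwards [hfin1, hfin2] with x hx1 hx2
      exact (ENNReal.coe_toNNReal (ENNReal.add_ne_top.mpr ⟨hx2, hx1⟩)).symm
    rw [h1]
    exact withDensity_congr_ae h2
  have hRHS : ∫ x, (1 / (2 * (ε₂ - ε₁))) * ‖N ε₂ x - N ε₁ x‖ ^ 2 ∂(μtv ε₂ + μtv ε₁)
      = ∫ x, (h2f x + h1f x).toNNReal
          • ((1 / (2 * (ε₂ - ε₁))) * ‖N ε₂ x - N ε₁ x‖ ^ 2) ∂ρ := by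
    rw [hsum, integral_withDensity_eq_integral_smul hwmeas]
  -- pointwise identification
  have hΔpos : (0:ℝ) < ε₂ - ε₁ := sub_pos.mpr hlt
  have hΔne : (ε₂ - ε₁) ≠ 0 := ne_of_gt hΔpos
  have hptwise : ∀ᵐ x ∂ρ, (h2f x + h1f x).toNNReal
        • ((1 / (2 * (ε₂ - ε₁))) * ‖N ε₂ x - N ε₁ x‖ ^ 2)
      = ⟪f₂ x, g x⟫_ℝ / ‖f₂ x‖ - ⟪f₁ x, g x⟫_ℝ / ‖f₁ x‖ := by
    filter_upwards [hcases, hmaster, hfin1, hfin2] with x hc hm hx1 hx2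
    have hcoe : ((h2f x + h1f x).toNNReal : ℝ) = (h2f x).toReal + (h1f x).toReal := by
      show (h2f x + h1f x).toReal = _
      exact ENNReal.toReal_add hx2 hx1
    rw [NNReal.smul_def, hcoe]
    by_cases hs : (h1f x).toReal = 0
    · obtain ⟨hf10, hg0, hf20, ht⟩ := hc.1 hs
      rw [hs, ht, hf10, hf20, hg0]
      simp
    by_cases ht : (h2f x).toReal = 0
    · exact absurd ((hc.2.1 ht).2.2.2) hs
    -- main case
    have hN1x : ‖N ε₁ x‖ = 1 := hm.2.2.2.1 hs
    have hN2x : ‖N ε₂ x‖ = 1 := hm.2.2.2.2 ht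
    have hnf1 : ‖f₁ x‖ = (h1f x).toReal := hc.2.2.1 hs
    have hnf2 : ‖f₂ x‖ = (h2f x).toReal := hc.2.2.2 ht
    have hf2N : f₂ x = (h2f x).toReal • N ε₂ x := hm.1
    have hf1N : f₁ x = (h1f x).toReal • N ε₁ x := rfl
    have hgeq : (ε₂ - ε₁) • g x = (h2f x).toReal • N ε₂ x - (h1f x).toReal • N ε₁ x := by
      rw [← hf2N, ← hf1N]
      show (ε₂ - ε₁) • g x = (f₁ x + (ε₂ - ε₁) • g x) - f₁ x
      rw [add_sub_cancel_left]
    have hid1 : ⟪N ε₁ x, N ε₁ x⟫_ℝ = 1 := by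
      rw [real_inner_self_eq_norm_sq, hN1x]; norm_num
    have hid2 : ⟪N ε₂ x, N ε₂ x⟫_ℝ = 1 := by
      rw [real_inner_self_eq_norm_sq, hN2x]; norm_num
    have hcomm : ⟪N ε₂ x, N ε₁ x⟫_ℝ = ⟪N ε₁ x, N ε₂ x⟫_ℝ := real_inner_comm _ _
    have e1 : ⟪f₁ x, g x⟫_ℝ / ‖f₁ x‖ = ⟪N ε₁ x, g x⟫_ℝ := by
      rw [hnf1, hf1N, real_inner_smul_left, mul_div_cancel_left₀ _ hs]
    have e2 : ⟪f₂ x, g x⟫_ℝ / ‖f₂ x‖ = ⟪N ε₂ x, g x⟫_ℝ := by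
      rw [hnf2, hf2N, real_inner_smul_left, mul_div_cancel_left₀ _ ht]
    have e3 : (ε₂ - ε₁) * (⟪N ε₂ x, g x⟫_ℝ - ⟪N ε₁ x, g x⟫_ℝ)
        = ((h2f x).toReal + (h1f x).toReal) * (1 - ⟪N ε₁ x, N ε₂ x⟫_ℝ) := by
      have h' : ⟪N ε₂ x - N ε₁ x, (ε₂ - ε₁) • g x⟫_ℝ
          = ((h2f x).toReal + (h1f x).toReal) * (1 - ⟪N ε₁ x, N ε₂ x⟫_ℝ) := by
        rw [hgeq]
        simp only [inner_sub_left, inner_sub_right, real_inner_smul_left,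
          real_inner_smul_right, hid1, hid2]
        rw [hcomm]
        ring
      rw [← h']
      simp only [inner_sub_left, real_inner_smul_right]
      ring
    have e4 : ‖N ε₂ x - N ε₁ x‖ ^ 2 = 2 - 2 * ⟪N ε₁ x, N ε₂ x⟫_ℝ := by
      rw [norm_sub_sq_real, hN1x, hN2x, hcomm]
      ring
    rw [e1, e2, e4]
    have e5 : ⟪N ε₂ x, g x⟫_ℝ - ⟪N ε₁ x, g x⟫_ℝ
        = ((h2f x).toReal + (h1f x).toReal) * (1 - ⟪N ε₁ x, N ε₂ x⟫_ℝ) / (ε₂ - ε₁) := by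
      rw [← e3, mul_comm, mul_div_assoc, div_self hΔne, mul_one]
    rw [e5, one_div, mul_inv]
    ring
  -- put everything together
  have hfinal : F' ε₂ - F' ε₁
      = ∫ x, (1 / (2 * (ε₂ - ε₁))) * ‖N ε₂ x - N ε₁ x‖ ^ 2 ∂(μtv ε₂ + μtv ε₁) := by
    rw [hdiffeq, hRHS]
    exact (integral_congr_ae hptwise).symm
  refine ⟨hfinal, ?_⟩
  rw [hfinal]
  refine integral_nonneg fun x => ?_
  have h1 : (0:ℝ) ≤ 1 / (2 * (ε₂ - ε₁)) := by positivity
  exact mul_nonneg h1 (sq_nonneg _)
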